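/- arXiv:1110.3168 — 3 statements merged into one kernel-verified Lean document; each statement's English description precedes it below -/
import Mathlib

section
/- (Theorem 2.4, second part) For every real p ≥ 1 and every sequence α : ℕ → A, p_p(α) = lim_{m→∞} (f_{α(0)} ∘ f_{α(1)} ∘ ⋯ ∘ f_{α(m-1)})(0) in l^p(A); that is, p_p : N(A) → ω_p^A is the canonical projection from the shift space onto the attractor of the IIFS (l^p(A), (f_a)_{a∈A}). -/
open scoped ENNReal
open Filter Topology

/-- For a sequence `α : ℕ → A`, the function `p_p(α) : A' → ℝ` (where `A' = A \ {z}`)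
given by `p_p(α)(b) = ∑_{k ∈ ℕ, α k = b} 2^{-(k+1)}`. -/
noncomputable def pFun {A : Type*} (z : A) (α : ℕ → A) (b : {b : A // b ≠ z}) : ℝ :=
  ∑' k : {k : ℕ | α k = (b : A)}, (2 : ℝ)⁻¹ ^ ((k : ℕ) + 1)

lemma summable_base : Summable (fun k : ℕ => (2 : ℝ)⁻¹ ^ (k + 1)) := by
  apply Summable.comp_injective (summable_geometric_of_lt_one (by norm_num) (by norm_num))
    (add_left_injective 1)

lemma tsum_base : ∑' k : ℕ, (2 : ℝ)⁻¹ ^ (k + 1) = 1 := by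
  have h : ∀ k : ℕ, (2 : ℝ)⁻¹ ^ (k + 1) = 2⁻¹ * 2⁻¹ ^ k := fun k => by ring
  rw [tsum_congr h, tsum_mul_left, tsum_geometric_of_lt_one (by norm_num) (by norm_num)]
  norm_num

lemma pFun_nonneg {A : Type*} (z : A) (α : ℕ → A) (b : {b : A // b ≠ z}) :
    0 ≤ pFun z α b :=
  tsum_nonneg fun k => by positivity

lemma pFun_eq_indicator {A : Type*} (z : A) (α : ℕ → A) (b : {b : A // b ≠ z}) :
    pFun z α b =
      ∑' k : ℕ, Set.indicator {k : ℕ | α k = (b : A)} (fun k => (2 : ℝ)⁻¹ ^ (k + 1)) k := by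
  unfold pFun
  exact tsum_subtype {k : ℕ | α k = (b : A)} (fun k => (2 : ℝ)⁻¹ ^ (k + 1))

lemma summable_pFun {A : Type*} (z : A) (α : ℕ → A) : Summable (pFun z α) := by
  classical
  apply summable_of_sum_le (c := 1) (pFun_nonneg z α)
  intro s
  have hind : ∀ b : {b : A // b ≠ z},
      Summable (Set.indicator {k : ℕ | α k = (b : A)} (fun k => (2 : ℝ)⁻¹ ^ (k + 1))) :=
    fun b => summable_base.indicator _
  have h1 : ∑ b ∈ s, pFun z α b
      = ∑' k : ℕ, ∑ b ∈ s, Set.indicator {k : ℕ | α k = (b : A)}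
          (fun k => (2 : ℝ)⁻¹ ^ (k + 1)) k := by
    rw [Finset.sum_congr rfl fun b _ => pFun_eq_indicator z α b]
    exact (Summable.tsum_finsetSum fun b _ => hind b).symm
  have hle : ∀ k : ℕ, ∑ b ∈ s, Set.indicator {k : ℕ | α k = (b : A)}
      (fun k => (2 : ℝ)⁻¹ ^ (k + 1)) k ≤ (2 : ℝ)⁻¹ ^ (k + 1) := by
    intro k
    by_cases hz : α k = z
    · have : ∀ b ∈ s, Set.indicator {k : ℕ | α k = (b : A)}
          (fun k => (2 : ℝ)⁻¹ ^ (k + 1)) k = 0 := by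
        intro b _
        apply Set.indicator_of_notMem
        simp only [Set.mem_setOf_eq, hz]
        exact fun h => b.2 h.symm
      rw [Finset.sum_congr rfl this, Finset.sum_const, smul_zero]
      positivity
    · have hb : ∀ b ∈ s, Set.indicator {k : ℕ | α k = (b : A)}
          (fun k => (2 : ℝ)⁻¹ ^ (k + 1)) k
          = if b = (⟨α k, hz⟩ : {b : A // b ≠ z}) then (2 : ℝ)⁻¹ ^ (k + 1) else 0 := by
        intro b _
        rw [Set.indicator_apply]
        congr 1
        simp only [Set.mem_setOf_eq, eq_comm (a := α k)]
        rw [Subtype.ext_iff]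
      rw [Finset.sum_congr rfl hb, Finset.sum_ite_eq' s _ (fun _ => (2 : ℝ)⁻¹ ^ (k + 1))]
      split_ifs
      · exact le_rfl
      · positivity
  have hnn : ∀ k : ℕ, 0 ≤ ∑ b ∈ s, Set.indicator {k : ℕ | α k = (b : A)}
      (fun k => (2 : ℝ)⁻¹ ^ (k + 1)) k := by
    intro k
    apply Finset.sum_nonneg
    intro b _
    exact Set.indicator_nonneg (fun k _ => by positivity) k
  rw [h1, ← tsum_base]
  exact Summable.tsum_le_tsum hle (Summable.of_nonneg_of_le hnn hle summable_base) summable_base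

lemma pFun_memℓp {A : Type*} (z : A) (α : ℕ → A) {P : ℝ≥0∞} (hP : 1 ≤ P) :
    Memℓp (pFun z α) P := by
  apply Memℓp.of_exponent_ge (q := 1) _ hP
  apply memℓp_gen
  simp only [ENNReal.toReal_one, Real.rpow_one]
  apply Summable.congr (summable_pFun z α)
  intro b
  rw [Real.norm_of_nonneg (pFun_nonneg z α b)]

/-- The map `p_p : N(A) → l^p(A)`, sending `α` to the element of `l^p(A)` with
coordinates `p_p(α)(b) = ∑_{k ∈ ℕ, α k = b} 2^{-(k+1)}`. -/
noncomputable def pp {A : Type*} (z : A) (α : ℕ → A) (P : ℝ≥0∞) [Fact (1 ≤ P)] :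
    lp (fun _ : {b : A // b ≠ z} => ℝ) P :=
  ⟨pFun z α, pFun_memℓp z α Fact.out⟩

/-- The element `u_a` of `l^p(A)`: `u_z = 0` and, for `a ≠ z`, `u_a` is the indicator
function of `{a}` on `A' = A \ {z}`. -/
noncomputable def uElem {A : Type*} (z : A) (P : ℝ≥0∞) (a : A) :
    lp (fun _ : {b : A // b ≠ z} => ℝ) P :=
  letI := Classical.decEq A
  letI := Classical.decEq {b : A // b ≠ z}
  if h : a = z then 0 else lp.single P ⟨a, h⟩ 1

/-- The map `f_a : l^p(A) → l^p(A)`, `f_a(x) = (x + u_a)/2`. -/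
noncomputable def fMap {A : Type*} (z : A) (P : ℝ≥0∞) (a : A)
    (x : lp (fun _ : {b : A // b ≠ z} => ℝ) P) : lp (fun _ : {b : A // b ≠ z} => ℝ) P :=
  (2 : ℝ)⁻¹ • (x + uElem z P a)

/-- `iterComp f ω m = f_{ω 0} ∘ f_{ω 1} ∘ ⋯ ∘ f_{ω (m-1)}`. -/
def iterComp {X : Type*} {I : Type*} (f : I → X → X) (ω : ℕ → I) : ℕ → X → X
  | 0 => id
  | m + 1 => iterComp f ω m ∘ f (ω m)

lemma sum_pFun_le {A : Type*} (z : A) (α : ℕ → A) (s : Finset {b : A // b ≠ z}) :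
    ∑ b ∈ s, pFun z α b ≤ 1 := by
  classical
  have hind : ∀ b : {b : A // b ≠ z},
      Summable (Set.indicator {k : ℕ | α k = (b : A)} (fun k => (2 : ℝ)⁻¹ ^ (k + 1))) :=
    fun b => summable_base.indicator _
  have h1 : ∑ b ∈ s, pFun z α b
      = ∑' k : ℕ, ∑ b ∈ s, Set.indicator {k : ℕ | α k = (b : A)}
          (fun k => (2 : ℝ)⁻¹ ^ (k + 1)) k := by
    rw [Finset.sum_congr rfl fun b _ => pFun_eq_indicator z α b]
    exact (Summable.tsum_finsetSum fun b _ => hind b).symm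
  have hle : ∀ k : ℕ, ∑ b ∈ s, Set.indicator {k : ℕ | α k = (b : A)}
      (fun k => (2 : ℝ)⁻¹ ^ (k + 1)) k ≤ (2 : ℝ)⁻¹ ^ (k + 1) := by
    intro k
    by_cases hz : α k = z
    · have : ∀ b ∈ s, Set.indicator {k : ℕ | α k = (b : A)}
          (fun k => (2 : ℝ)⁻¹ ^ (k + 1)) k = 0 := by
        intro b _
        apply Set.indicator_of_notMem
        simp only [Set.mem_setOf_eq, hz]
        exact fun h => b.2 h.symm
      rw [Finset.sum_congr rfl this, Finset.sum_const, smul_zero]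
      positivity
    · have hb : ∀ b ∈ s, Set.indicator {k : ℕ | α k = (b : A)}
          (fun k => (2 : ℝ)⁻¹ ^ (k + 1)) k
          = if b = (⟨α k, hz⟩ : {b : A // b ≠ z}) then (2 : ℝ)⁻¹ ^ (k + 1) else 0 := by
        intro b _
        rw [Set.indicator_apply]
        congr 1
        simp only [Set.mem_setOf_eq, eq_comm (a := α k)]
        rw [Subtype.ext_iff]
      rw [Finset.sum_congr rfl hb, Finset.sum_ite_eq' s _ (fun _ => (2 : ℝ)⁻¹ ^ (k + 1))]
      split_ifs
      · exact le_rfl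
      · positivity
  have hnn : ∀ k : ℕ, 0 ≤ ∑ b ∈ s, Set.indicator {k : ℕ | α k = (b : A)}
      (fun k => (2 : ℝ)⁻¹ ^ (k + 1)) k := by
    intro k
    apply Finset.sum_nonneg
    intro b _
    exact Set.indicator_nonneg (fun k _ => by positivity) k
  rw [h1, ← tsum_base]
  exact Summable.tsum_le_tsum hle (Summable.of_nonneg_of_le hnn hle summable_base) summable_base

lemma pFun_le_one {A : Type*} (z : A) (α : ℕ → A) (b : {b : A // b ≠ z}) :
    pFun z α b ≤ 1 := by
  simpa using sum_pFun_le z α {b}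

lemma norm_pp_le_one {A : Type*} (z : A) (P : ℝ≥0∞) [Fact (1 ≤ P)] (hP : P ≠ ∞)
    (α : ℕ → A) : ‖pp z α P‖ ≤ 1 := by
  have hP1 : (1 : ℝ≥0∞) ≤ P := Fact.out
  have hp : 0 < P.toReal := ENNReal.toReal_pos (zero_lt_one.trans_le hP1).ne' hP
  have hp1 : 1 ≤ P.toReal := by
    have := ENNReal.toReal_mono hP hP1
    simpa using this
  apply lp.norm_le_of_forall_sum_le hp zero_le_one
  intro s
  rw [Real.one_rpow]
  calc ∑ b ∈ s, ‖pp z α P b‖ ^ P.toReal ≤ ∑ b ∈ s, pFun z α b := by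
        apply Finset.sum_le_sum
        intro b _
        have hnn := pFun_nonneg z α b
        have hle := pFun_le_one z α b
        have : ‖pp z α P b‖ = pFun z α b := Real.norm_of_nonneg hnn
        rw [this]
        rcases eq_or_lt_of_le hnn with h0 | h0
        · rw [← h0, Real.zero_rpow hp.ne']
        · calc (pFun z α b) ^ P.toReal ≤ (pFun z α b) ^ (1 : ℝ) :=
              Real.rpow_le_rpow_of_exponent_ge h0 hle hp1
            _ = pFun z α b := Real.rpow_one _
    _ ≤ 1 := sum_pFun_le z α s

lemma uElem_apply {A : Type*} (z : A) (P : ℝ≥0∞) (a : A) (b : {b : A // b ≠ z}) :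
    uElem z P a b = Set.indicator {c : A | c = a} (fun _ => (1 : ℝ)) (b : A) := by
  letI : DecidableEq A := Classical.decEq A
  letI : DecidableEq {b : A // b ≠ z} := Classical.decEq _
  unfold uElem
  by_cases h : a = z
  · rw [dif_pos h]
    have hnb : (b : A) ∉ {c : A | c = a} := fun hab => b.2 (hab.trans h)
    rw [Set.indicator_of_notMem (s := {c : A | c = a}) hnb]
    simp [lp.coeFn_zero]
  · rw [dif_neg h]
    by_cases hab : (b : A) = a
    · have hb : b = (⟨a, h⟩ : {b : A // b ≠ z}) := Subtype.ext hab
      have hmem : (b : A) ∈ {c : A | c = a} := hab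
      rw [Set.indicator_of_mem (s := {c : A | c = a}) hmem, hb, lp.single_apply_self]
    · rw [lp.single_apply_ne _ _ _ (fun hb => hab (by rw [hb])),
        Set.indicator_of_notMem (s := {c : A | c = a}) hab]

lemma pFun_decomp {A : Type*} (z : A) (α : ℕ → A) (m : ℕ) (b : {b : A // b ≠ z}) :
    pFun z α b = (∑ k ∈ Finset.range m,
        Set.indicator {k : ℕ | α k = (b : A)} (fun k => (2 : ℝ)⁻¹ ^ (k + 1)) k)
      + (2 : ℝ)⁻¹ ^ m * pFun z (fun j => α (j + m)) b := by
  rw [pFun_eq_indicator, ← Summable.sum_add_tsum_nat_add m (summable_base.indicator _)]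
  congr 1
  rw [pFun_eq_indicator, ← tsum_mul_left]
  congr 1
  funext j
  by_cases h : α (j + m) = (b : A) <;>
    simp [Set.indicator_apply, h, pow_add, pow_succ, mul_comm, mul_assoc, mul_left_comm]

lemma iterComp_eq {A : Type*} (z : A) (P : ℝ≥0∞) [Fact (1 ≤ P)] (α : ℕ → A) (m : ℕ)
    (x : lp (fun _ : {b : A // b ≠ z} => ℝ) P) :
    iterComp (fMap z P) α m x = ((2 : ℝ)⁻¹ ^ m) • x
      + ∑ k ∈ Finset.range m, ((2 : ℝ)⁻¹ ^ (k + 1)) • uElem z P (α k) := by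
  induction m generalizing x with
  | zero => simp [iterComp]
  | succ m ih =>
    show iterComp (fMap z P) α m (fMap z P (α m) x) = _
    rw [ih]
    unfold fMap
    rw [Finset.sum_range_succ, smul_smul, ← pow_succ, smul_add]
    abel

lemma key_decomp {A : Type*} (z : A) (P : ℝ≥0∞) [Fact (1 ≤ P)] (α : ℕ → A) (m : ℕ) :
    pp z α P - iterComp (fMap z P) α m 0
      = ((2 : ℝ)⁻¹ ^ m) • pp z (fun j => α (j + m)) P := by
  apply lp.ext
  funext b
  rw [lp.coeFn_sub, Pi.sub_apply, lp.coeFn_smul, Pi.smul_apply, iterComp_eq, smul_zero,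
    zero_add]
  have hsum : (↑(∑ k ∈ Finset.range m, ((2 : ℝ)⁻¹ ^ (k + 1)) • uElem z P (α k))
        : ∀ _ : {b : A // b ≠ z}, ℝ) b
      = ∑ k ∈ Finset.range m,
          Set.indicator {k : ℕ | α k = (b : A)} (fun k => (2 : ℝ)⁻¹ ^ (k + 1)) k := by
    rw [lp.coeFn_sum, Finset.sum_apply]
    apply Finset.sum_congr rfl
    intro k _
    rw [lp.coeFn_smul, Pi.smul_apply, uElem_apply]
    by_cases h : α k = (b : A)
    · rw [Set.indicator_of_mem (by exact h.symm), Set.indicator_of_mem (by exact h)]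
      simp
    · rw [Set.indicator_of_notMem (by exact fun hh => h hh.symm),
        Set.indicator_of_notMem (by exact h)]
      simp
  rw [hsum]
  have := pFun_decomp z α m b
  show pFun z α b - _ = (2 : ℝ)⁻¹ ^ m • pFun z (fun j => α (j + m)) b
  rw [this]
  ring_nf

/-- Theorem 2.4, second part. For every `p ∈ [1, ∞)` and every
`α : ℕ → A`, `p_p(α) = lim_m (f_{α 0} ∘ ⋯ ∘ f_{α (m-1)}) 0` in `l^p(A)`; i.e. `p_p` is the
canonical projection from the shift space onto the attractor of the IIFS. -/
theorem pp_is_canonical_projection {A : Type*} [Infinite A] (z : A) (P : ℝ≥0∞)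
    [Fact (1 ≤ P)] (hP : P ≠ ∞) (α : ℕ → A) :
    Tendsto (fun m : ℕ => iterComp (fMap z P) α m 0) atTop (𝓝 (pp z α P)) := by
  have hb : Tendsto (fun m : ℕ => pp z α P - iterComp (fMap z P) α m 0) atTop (𝓝 0) := by
    apply squeeze_zero_norm (a := fun m : ℕ => (2 : ℝ)⁻¹ ^ m)
    · intro m
      rw [key_decomp, norm_smul]
      have h1 : ‖(2 : ℝ)⁻¹ ^ m‖ = (2 : ℝ)⁻¹ ^ m := by
        rw [Real.norm_of_nonneg (by positivity)]
      rw [h1]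
      calc (2 : ℝ)⁻¹ ^ m * ‖pp z (fun j => α (j + m)) P‖
          ≤ (2 : ℝ)⁻¹ ^ m * 1 := by
            apply mul_le_mul_of_nonneg_left (norm_pp_le_one z P hP _) (by positivity)
        _ = (2 : ℝ)⁻¹ ^ m := mul_one _
    · exact tendsto_pow_atTop_nhds_zero_of_lt_one (by norm_num) (by norm_num)
  have h2 : Tendsto (fun m : ℕ => pp z α P - (pp z α P - iterComp (fMap z P) α m 0))
      atTop (𝓝 (pp z α P - 0)) := tendsto_const_nhds.sub hb
  have h3 : (fun m : ℕ => pp z α P - (pp z α P - iterComp (fMap z P) α m 0))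
      = fun m : ℕ => iterComp (fMap z P) α m 0 := by
    funext m
    abel
  rw [h3, sub_zero] at h2
  exact h2
end

section
/- (Proposition 3.2) For every real p ≥ 1, the map p_p : N(A) → l^p(A) is continuous, where N(A) = A^ℕ carries the product topology with A discrete and l^p(A) carries the norm topology. -/
open scoped ENNReal
open Filter Topology

lemma sum_indicator_le' {A : Type*} (z : A) (γ : ℕ → A) (s : Finset {b : A // b ≠ z}) (k : ℕ) :
    ∑ b ∈ s, Set.indicator {k : ℕ | γ k = (b : A)} (fun k => (2 : ℝ)⁻¹ ^ (k + 1)) k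
      ≤ (2 : ℝ)⁻¹ ^ (k + 1) := by
  classical
  by_cases hz : γ k = z
  · have : ∀ b ∈ s, Set.indicator {k : ℕ | γ k = (b : A)}
        (fun k => (2 : ℝ)⁻¹ ^ (k + 1)) k = 0 := by
      intro b _
      apply Set.indicator_of_notMem
      simp only [Set.mem_setOf_eq, hz]
      exact fun h => b.2 h.symm
    rw [Finset.sum_congr rfl this, Finset.sum_const, smul_zero]
    positivity
  · have hb : ∀ b ∈ s, Set.indicator {k : ℕ | γ k = (b : A)}
        (fun k => (2 : ℝ)⁻¹ ^ (k + 1)) k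
        = if b = (⟨γ k, hz⟩ : {b : A // b ≠ z}) then (2 : ℝ)⁻¹ ^ (k + 1) else 0 := by
      intro b _
      rw [Set.indicator_apply]
      congr 1
      simp only [Set.mem_setOf_eq, eq_comm (a := γ k)]
      rw [Subtype.ext_iff]
    rw [Finset.sum_congr rfl hb, Finset.sum_ite_eq' s _ (fun _ => (2 : ℝ)⁻¹ ^ (k + 1))]
    split_ifs
    · exact le_rfl
    · positivity

lemma summable_diff_abs {A : Type*} (z : A) (α β : ℕ → A) :
    Summable (fun b : {b : A // b ≠ z} => |pFun z β b - pFun z α b|) :=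
  ((summable_pFun z β).sub (summable_pFun z α)).abs

lemma tail_sum (N : ℕ) :
    ∑' k : ℕ, (if N ≤ k then (2 : ℝ)⁻¹ ^ (k + 1) else 0) = (2 : ℝ)⁻¹ ^ N := by
  have hinj : Function.Injective (fun j : ℕ => j + N) := add_left_injective N
  have hsupp : Function.support (fun k : ℕ => if N ≤ k then (2 : ℝ)⁻¹ ^ (k + 1) else 0)
      ⊆ Set.range (fun j : ℕ => j + N) := by
    intro k hk
    simp only [Function.mem_support] at hk
    by_cases h : N ≤ k
    · exact ⟨k - N, show k - N + N = k by omega⟩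
    · simp [h] at hk
  rw [← hinj.tsum_eq hsupp]
  have h1 : ∀ j : ℕ, (if N ≤ j + N then (2 : ℝ)⁻¹ ^ (j + N + 1) else 0)
      = (2 : ℝ)⁻¹ ^ N * (2 : ℝ)⁻¹ ^ (j + 1) := by
    intro j
    rw [if_pos (by omega)]
    ring
  rw [tsum_congr h1, tsum_mul_left, tsum_base, mul_one]

set_option maxHeartbeats 1000000 in
/-- Key estimate: if `α` and `β` agree below `N`, the ℓ¹ distance of the images is small. -/
lemma key_estimate {A : Type*} (z : A) (α β : ℕ → A) (N : ℕ)
    (h : ∀ k < N, β k = α k) :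
    ∑' b : {b : A // b ≠ z}, |pFun z β b - pFun z α b| ≤ 2 * (2 : ℝ)⁻¹ ^ N := by
  classical
  set f : ℕ → ℝ := fun k => (2 : ℝ)⁻¹ ^ (k + 1) with hf
  set I : (ℕ → A) → {b : A // b ≠ z} → ℕ → ℝ :=
    fun γ b => Set.indicator {k : ℕ | γ k = (b : A)} f with hI
  have hIsumm : ∀ γ b, Summable (I γ b) := fun γ b => summable_base.indicator _
  have hInn : ∀ γ b k, 0 ≤ I γ b k := fun γ b k =>
    Set.indicator_nonneg (fun k _ => by positivity) k
  have hIle : ∀ γ b k, I γ b k ≤ f k := fun γ b k =>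
    Set.indicator_le_self' (fun k _ => by positivity) k
  set g : {b : A // b ≠ z} → ℕ → ℝ :=
    fun b k => if N ≤ k then I β b k + I α b k else 0 with hg
  have hgnn : ∀ b k, 0 ≤ g b k := by
    intro b k
    simp only [hg]
    split_ifs
    · exact add_nonneg (hInn _ _ _) (hInn _ _ _)
    · exact le_rfl
  have hgle : ∀ b k, g b k ≤ 2 * f k := by
    intro b k
    simp only [hg]
    split_ifs
    · linarith [hIle β b k, hIle α b k]
    · positivity
  have hgsumm : ∀ b, Summable (g b) := fun b =>
    Summable.of_nonneg_of_le (hgnn b) (hgle b) (summable_base.mul_left 2)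
  -- pointwise bound |d b| ≤ ∑' k, g b k
  have hpoint : ∀ b, |pFun z β b - pFun z α b| ≤ ∑' k, g b k := by
    intro b
    rw [pFun_eq_indicator, pFun_eq_indicator, ← Summable.tsum_sub (hIsumm β b) (hIsumm α b)]
    have habs : ∀ k, |I β b k - I α b k| ≤ g b k := by
      intro k
      by_cases hk : N ≤ k
      · simp only [hg, if_pos hk]
        have := hInn β b k; have := hInn α b k
        rw [abs_sub_le_iff]
        constructor <;> linarith
      · have hkN : k < N := by omega
        have : I β b k = I α b k := by
          simp only [hI, Set.indicator_apply, Set.mem_setOf_eq, h k hkN]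
        simp [this, hg, hk]
    have hdsumm : Summable fun k => I β b k - I α b k := (hIsumm β b).sub (hIsumm α b)
    rw [abs_le]
    constructor
    · rw [← tsum_neg]
      apply Summable.tsum_le_tsum _ (hgsumm b).neg hdsumm
      intro k
      have := habs k
      have := neg_abs_le (I β b k - I α b k)
      linarith
    · apply Summable.tsum_le_tsum _ hdsumm (hgsumm b)
      intro k
      exact (le_abs_self _).trans (habs k)
  -- bound finset sums
  apply Summable.tsum_le_of_sum_le (summable_diff_abs z α β)
  intro s
  have h1 : ∑ b ∈ s, |pFun z β b - pFun z α b| ≤ ∑ b ∈ s, ∑' k, g b k :=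
    Finset.sum_le_sum fun b _ => hpoint b
  have h2 : ∑ b ∈ s, ∑' k, g b k = ∑' k, ∑ b ∈ s, g b k :=
    (Summable.tsum_finsetSum fun b _ => hgsumm b).symm
  have h3 : ∀ k, ∑ b ∈ s, g b k ≤ 2 * (if N ≤ k then f k else 0) := by
    intro k
    by_cases hk : N ≤ k
    · simp only [hg, if_pos hk, Finset.sum_add_distrib]
      have := sum_indicator_le' z β s k
      have := sum_indicator_le' z α s k
      simp only [hI, hf] at *
      linarith
    · simp [hg, hk]
  have h4 : ∑' k, ∑ b ∈ s, g b k ≤ ∑' k, 2 * (if N ≤ k then f k else 0) := by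
    apply Summable.tsum_le_tsum h3
    · apply Summable.of_nonneg_of_le (fun k => Finset.sum_nonneg fun b _ => hgnn b k) h3
      exact ((summable_base.indicator {k | N ≤ k}).congr
        (fun k => by simp [Set.indicator_apply, Set.mem_setOf_eq, hf])).mul_left 2
    · exact ((summable_base.indicator {k | N ≤ k}).congr
        (fun k => by simp [Set.indicator_apply, Set.mem_setOf_eq, hf])).mul_left 2
  have h5 : ∑' k, 2 * (if N ≤ k then f k else 0) = 2 * (2 : ℝ)⁻¹ ^ N := by
    rw [tsum_mul_left, tail_sum]
  linarith [h1, h2 ▸ h1, h4]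

/-- The `lp` norm is bounded by the ℓ¹ norm of the coordinates. -/
lemma lp_norm_le_tsum {A : Type*} (z : A) (P : ℝ≥0∞) [Fact (1 ≤ P)] (hP : P ≠ ∞)
    (α β : ℕ → A) :
    ‖pp z β P - pp z α P‖ ≤ ∑' b : {b : A // b ≠ z}, |pFun z β b - pFun z α b| := by
  have hP1 : (1 : ℝ≥0∞) ≤ P := Fact.out
  have hpr : 0 < P.toReal := ENNReal.toReal_pos (by intro h; rw [h] at hP1; simp at hP1) hP
  set pr := P.toReal with hprdef
  set S := ∑' b : {b : A // b ≠ z}, |pFun z β b - pFun z α b| with hS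
  have hSnn : 0 ≤ S := tsum_nonneg fun b => abs_nonneg _
  apply lp.norm_le_of_tsum_le hpr hSnn
  have hcoe : ∀ b : {b : A // b ≠ z},
      (pp z β P - pp z α P : lp (fun _ : {b : A // b ≠ z} => ℝ) P) b
        = pFun z β b - pFun z α b := fun b => rfl
  have hsd := summable_diff_abs z α β
  have hble : ∀ b : {b : A // b ≠ z}, |pFun z β b - pFun z α b| ≤ S :=
    fun b => Summable.le_tsum hsd b fun _ _ => abs_nonneg _
  have hterm : ∀ b : {b : A // b ≠ z},
      ‖(pp z β P - pp z α P : lp (fun _ : {b : A // b ≠ z} => ℝ) P) b‖ ^ pr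
        ≤ S ^ (pr - 1) * |pFun z β b - pFun z α b| := by
    intro b
    rw [hcoe b, Real.norm_eq_abs]
    have hb := abs_nonneg (pFun z β b - pFun z α b)
    calc |pFun z β b - pFun z α b| ^ pr
        = |pFun z β b - pFun z α b| ^ (pr - 1) * |pFun z β b - pFun z α b| := by
          rcases eq_or_lt_of_le hb with hb0 | hb0
          · rw [← hb0]
            simp [Real.zero_rpow (ne_of_gt hpr)]
          · rw [← Real.rpow_add_one (ne_of_gt hb0)]
            ring_nf
      _ ≤ S ^ (pr - 1) * |pFun z β b - pFun z α b| := by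
          apply mul_le_mul_of_nonneg_right _ hb
          have hpr1 : (1 : ℝ) ≤ pr := by
            simpa using ENNReal.toReal_mono hP hP1
          exact Real.rpow_le_rpow hb (hble b) (by linarith)
  have hsumm : Summable fun b : {b : A // b ≠ z} => S ^ (pr - 1) * |pFun z β b - pFun z α b| :=
    hsd.mul_left _
  calc ∑' b, ‖(pp z β P - pp z α P : lp (fun _ : {b : A // b ≠ z} => ℝ) P) b‖ ^ pr
      ≤ ∑' b, S ^ (pr - 1) * |pFun z β b - pFun z α b| := by
        apply Summable.tsum_le_tsum hterm _ hsumm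
        apply Summable.of_nonneg_of_le (fun b => Real.rpow_nonneg (norm_nonneg _) _) hterm hsumm
    _ = S ^ (pr - 1) * S := by rw [tsum_mul_left]
    _ ≤ S ^ pr := by
        rcases eq_or_lt_of_le hSnn with h0 | h0
        · rw [← h0]; simp [Real.zero_rpow (ne_of_gt hpr)]
        · rw [← Real.rpow_add_one (ne_of_gt h0)]; ring_nf; exact le_refl _

/-- Proposition 3.2. For every `p ∈ [1, ∞)`, the map
`p_p : N(A) → l^p(A)` is continuous, where `N(A) = A^ℕ` carries the product topology with
`A` discrete and `l^p(A)` the norm topology. -/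
theorem pp_continuous {A : Type*} [Infinite A] [TopologicalSpace A] [DiscreteTopology A]
    (z : A) (P : ℝ≥0∞) [Fact (1 ≤ P)] (hP : P ≠ ∞) :
    Continuous (fun α : ℕ → A => pp z α P) := by
  rw [continuous_iff_continuousAt]
  intro α
  rw [ContinuousAt, Metric.tendsto_nhds]
  intro ε hε
  obtain ⟨N, hN⟩ : ∃ N : ℕ, (2 : ℝ)⁻¹ ^ N < ε / 2 :=
    exists_pow_lt_of_lt_one (by linarith) (by norm_num)
  have hev : ∀ᶠ β : ℕ → A in 𝓝 α, ∀ k ∈ Finset.range N, β k = α k := by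
    rw [Filter.eventually_all_finset]
    intro k _
    have hopen : IsOpen ((fun β : ℕ → A => β k) ⁻¹' {α k}) :=
      (isOpen_discrete _).preimage (continuous_apply k)
    exact Filter.mem_of_superset (hopen.mem_nhds rfl) fun β hβ => hβ
  filter_upwards [hev] with β hβ
  rw [dist_eq_norm]
  calc ‖pp z β P - pp z α P‖
      ≤ ∑' b : {b : A // b ≠ z}, |pFun z β b - pFun z α b| := lp_norm_le_tsum z P hP α β
    _ ≤ 2 * (2 : ℝ)⁻¹ ^ N :=
        key_estimate z α β N fun k hk => hβ k (Finset.mem_range.mpr hk)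
    _ < ε := by linarith
end

section
/- (Proposition 3.4) Let α, α^1, α^2, … : ℕ → A, set x = p_p(α) and x_n = p_p(α^n), and suppose there exist N ∈ ℕ with N ≥ 1 and a, b ∈ A with a ≠ b such that α(N) = a and α(k) = b for all k > N. If lim_{n→∞} ‖x_n − x‖_p = 0 in l^p(A), then for every m > N + 1 there exists L ∈ ℕ such that for every l ≥ L one of the following holds: (i) α^l(k) = α(k) for all k < N, α^l(N) = a, and α^l(k) = b for all k with N < k ≤ m; or (ii) α^l(k) = α(k) for all k < N, α^l(N) = b, and α^l(k) = a for all k with N < k ≤ m. -/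
open scoped ENNReal
open Filter Topology

section AuxTails
open scoped Classical

noncomputable def fb (j : ℕ) : ℝ := (2 : ℝ)⁻¹ ^ (j + 1)

lemma fb_pos (j : ℕ) : 0 < fb j := by unfold fb; positivity
lemma fb_nonneg (j : ℕ) : 0 ≤ fb j := (fb_pos j).le
lemma summable_fb : Summable fb := summable_base
lemma fb_antitone {i j : ℕ} (h : i ≤ j) : fb j ≤ fb i := by
  unfold fb
  exact pow_le_pow_of_le_one (by norm_num) (by norm_num) (by omega)

noncomputable def wt {A : Type*} (γ : ℕ → A) (c : A) (j : ℕ) : ℝ :=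
  if γ j = c then fb j else 0

lemma wt_nonneg {A : Type*} (γ : ℕ → A) (c : A) (j : ℕ) : 0 ≤ wt γ c j := by
  unfold wt; split_ifs; exacts [fb_nonneg j, le_rfl]

lemma wt_le_fb {A : Type*} (γ : ℕ → A) (c : A) (j : ℕ) : wt γ c j ≤ fb j := by
  unfold wt; split_ifs; exacts [le_rfl, fb_nonneg j]

lemma summable_wt {A : Type*} (γ : ℕ → A) (c : A) : Summable (wt γ c) :=
  Summable.of_nonneg_of_le (wt_nonneg γ c) (wt_le_fb γ c) summable_fb

lemma summable_wt_add {A : Type*} (γ : ℕ → A) (c : A) (t : ℕ) :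
    Summable (fun j => wt γ c (j + t)) :=
  (summable_nat_add_iff t).2 (summable_wt γ c)

lemma summable_fb_add (t : ℕ) : Summable (fun j => fb (j + t)) :=
  (summable_nat_add_iff t).2 summable_fb

noncomputable def Tl {A : Type*} (γ : ℕ → A) (c : A) (t : ℕ) : ℝ := ∑' j, wt γ c (j + t)

noncomputable def Pv {A : Type*} (γ : ℕ → A) (c : A) : ℝ := ∑' j, wt γ c j

lemma Pv_split {A : Type*} (γ : ℕ → A) (c : A) (t : ℕ) :
    Pv γ c = ∑ j ∈ Finset.range t, wt γ c j + Tl γ c t :=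
  (Summable.sum_add_tsum_nat_add t (summable_wt γ c)).symm

lemma tsum_fb_add (t : ℕ) : ∑' j, fb (j + t) = (2 : ℝ)⁻¹ ^ t := by
  have h : ∀ j : ℕ, fb (j + t) = (2 : ℝ)⁻¹ ^ t * ((2:ℝ)⁻¹ ^ (j+1)) := by
    intro j; unfold fb; rw [← pow_add]; ring_nf
  rw [tsum_congr h, tsum_mul_left, tsum_base, mul_one]

lemma Tl_nonneg {A : Type*} (γ : ℕ → A) (c : A) (t : ℕ) : 0 ≤ Tl γ c t :=
  tsum_nonneg fun j => wt_nonneg γ c _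

lemma Tl_le {A : Type*} (γ : ℕ → A) (c : A) (t : ℕ) : Tl γ c t ≤ (2 : ℝ)⁻¹ ^ t := by
  rw [← tsum_fb_add t]
  exact Summable.tsum_le_tsum (fun j => wt_le_fb γ c _) (summable_wt_add γ c t) (summable_fb_add t)

lemma Tl_succ {A : Type*} (γ : ℕ → A) (c : A) (t : ℕ) :
    Tl γ c t = wt γ c t + Tl γ c (t + 1) := by
  unfold Tl
  rw [Summable.tsum_eq_zero_add (summable_wt_add γ c t)]
  simp only [Nat.zero_add]
  congr 1
  apply tsum_congr; intro j; congr 1; omega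

lemma le_Tl {A : Type*} (γ : ℕ → A) (c : A) {t j : ℕ} (h : t ≤ j) (hc : γ j = c) :
    fb j ≤ Tl γ c t := by
  have := Summable.le_tsum (summable_wt_add γ c t) (j - t) (fun i _ => wt_nonneg γ c _)
  have he : wt γ c (j - t + t) = fb j := by
    have : j - t + t = j := by omega
    rw [this]; unfold wt; rw [if_pos hc]
  rw [he] at this; exact this

lemma Tl_hole {A : Type*} (γ : ℕ → A) (c : A) {t j0 : ℕ} (h : t ≤ j0) (hne : γ j0 ≠ c) :
    Tl γ c t ≤ (2 : ℝ)⁻¹ ^ t - fb j0 := by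
  have key : Tl γ c t + fb j0 ≤ (2 : ℝ)⁻¹ ^ t := by
    have he : ∀ j : ℕ, (if j = j0 - t then fb j0 else 0) = (if j + t = j0 then fb j0 else 0) := by
      intro j; congr 1; simp only [eq_iff_iff]; omega
    have hsum_e : ∑' j : ℕ, (if j + t = j0 then fb j0 else 0) = fb j0 := by
      rw [← tsum_congr he, tsum_ite_eq]
    have hse : Summable (fun j : ℕ => if j + t = j0 then fb j0 else 0) :=
      Summable.congr ((hasSum_ite_eq (j0 - t) (fb j0)).summable) he
    have hterm : ∀ j : ℕ, wt γ c (j + t) + (if j + t = j0 then fb j0 else 0) ≤ fb (j + t) := by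
      intro j
      by_cases hj : j + t = j0
      · rw [if_pos hj, hj]
        have : wt γ c j0 = 0 := by unfold wt; rw [if_neg hne]
        rw [hj] at *; rw [this, zero_add]
      · rw [if_neg hj, add_zero]; exact wt_le_fb γ c _
    calc Tl γ c t + fb j0
        = (∑' j, wt γ c (j + t)) + ∑' j, (if j + t = j0 then fb j0 else 0) := by
          rw [hsum_e]; rfl
      _ = ∑' j, (wt γ c (j + t) + (if j + t = j0 then fb j0 else 0)) :=
          (Summable.tsum_add (summable_wt_add γ c t) hse).symm
      _ ≤ ∑' j, fb (j + t) :=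
          Summable.tsum_le_tsum hterm ((summable_wt_add γ c t).add hse) (summable_fb_add t)
      _ = (2 : ℝ)⁻¹ ^ t := tsum_fb_add t
  linarith

lemma Tl_full {A : Type*} (γ : ℕ → A) (c : A) (t : ℕ) (h : ∀ j, t ≤ j → γ j = c) :
    Tl γ c t = (2 : ℝ)⁻¹ ^ t := by
  rw [← tsum_fb_add t]
  apply tsum_congr; intro j
  unfold wt; rw [if_pos (h _ (by omega))]

lemma Tl_zero {A : Type*} (γ : ℕ → A) (c : A) (t : ℕ) (h : ∀ j, t ≤ j → γ j ≠ c) :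
    Tl γ c t = 0 := by
  unfold Tl
  have : ∀ j : ℕ, wt γ c (j + t) = 0 := by
    intro j; unfold wt; rw [if_neg (h _ (by omega))]
  rw [tsum_congr this, tsum_zero]

lemma Tl_pair {A : Type*} (γ : ℕ → A) {a b : A} (hab : a ≠ b) (t : ℕ) :
    Tl γ a t + Tl γ b t ≤ (2 : ℝ)⁻¹ ^ t := by
  rw [← tsum_fb_add t]
  unfold Tl
  rw [← Summable.tsum_add (summable_wt_add γ a t) (summable_wt_add γ b t)]
  apply Summable.tsum_le_tsum _ ((summable_wt_add γ a t).add (summable_wt_add γ b t)) (summable_fb_add t)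
  intro j
  unfold wt
  split_ifs with h1 h2 h2
  · exact absurd (h1.symm.trans h2) hab
  · simp [fb_nonneg]
  · simp [fb_nonneg]
  · simp [fb_nonneg]

lemma Tl_congr_zero {A : Type*} (γ : ℕ → A) (c : A) {t s : ℕ} (hts : t ≤ s)
    (h : ∀ j, t ≤ j → j < s → γ j ≠ c) : Tl γ c t = Tl γ c s := by
  induction s, hts using Nat.le_induction with
  | base => rfl
  | succ s hts ih =>
    rw [ih (fun j h1 h2 => h j h1 (by omega)), Tl_succ]
    have : wt γ c s = 0 := by unfold wt; rw [if_neg (h s hts (by omega))]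
    rw [this, zero_add]

lemma Pv_diff {A : Type*} (γ β : ℕ → A) (c : A) (k : ℕ) (hag : ∀ j < k, β j = γ j) :
    Pv β c - Pv γ c = Tl β c k - Tl γ c k := by
  rw [Pv_split β c k, Pv_split γ c k]
  have : ∑ j ∈ Finset.range k, wt β c j = ∑ j ∈ Finset.range k, wt γ c j := by
    apply Finset.sum_congr rfl
    intro j hj
    unfold wt; rw [hag j (Finset.mem_range.1 hj)]
  rw [this]; ring

lemma lemA {A : Type*} (γ β : ℕ → A) (m k j0 : ℕ) (c : A)
    (hβk : β k = c) (hγk : γ k ≠ c) (hj0 : k < j0) (hj0m : j0 ≤ m + 1) (hγj0 : γ j0 ≠ c)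
    (HT : |Tl β c k - Tl γ c k| ≤ (2 : ℝ)⁻¹ ^ (m + 3)) : False := by
  have h1 : fb k ≤ Tl β c k := le_Tl β c le_rfl hβk
  have h2 : Tl γ c k = Tl γ c (k + 1) := by
    rw [Tl_succ]
    have : wt γ c k = 0 := by unfold wt; rw [if_neg hγk]
    rw [this, zero_add]
  have h3 : Tl γ c (k + 1) ≤ (2 : ℝ)⁻¹ ^ (k + 1) - fb j0 := Tl_hole γ c (by omega) hγj0
  have h4 : fb (m + 1) ≤ fb j0 := fb_antitone hj0m
  have h5 : fb k = (2:ℝ)⁻¹ ^ (k+1) := rfl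
  have h6 : fb (m+1) = (2:ℝ)⁻¹ ^ (m+2) := rfl
  have h7 : (2:ℝ)⁻¹ ^ (m+3) < (2:ℝ)⁻¹ ^ (m+2) := by
    apply pow_lt_pow_right_of_lt_one₀ (by norm_num) (by norm_num) (by omega)
  rw [abs_le] at HT
  linarith [HT.1, HT.2]

lemma step {A : Type*} (z : A) (γ β : ℕ → A) (N m : ℕ) (a' b' : A) (hm : N + 1 < m)
    (hab : a' ≠ b') (hγN : γ N = a') (hγt : ∀ j, N < j → γ j = b')
    (Hc : ∀ c : A, c ≠ z → |Pv β c - Pv γ c| ≤ (2 : ℝ)⁻¹ ^ (m + 3))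
    (k : ℕ) (hk : k ≤ m) (hag : ∀ j < k, β j = γ j) :
    β k = γ k ∨ (k = N ∧ β k = b') := by
  have HT : ∀ c : A, c ≠ z → |Tl β c k - Tl γ c k| ≤ (2 : ℝ)⁻¹ ^ (m + 3) := by
    intro c hc
    rw [← Pv_diff γ β c k hag]
    exact Hc c hc
  set c := β k with hc
  by_cases hcd : c = γ k
  · exact Or.inl hcd
  have hmono : ∀ {s t : ℕ}, s ≤ t → (2:ℝ)⁻¹ ^ t ≤ (2:ℝ)⁻¹ ^ s := by
    intro s t h
    exact pow_le_pow_of_le_one (by norm_num) (by norm_num) h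
  have hstrict : ∀ {s t : ℕ}, s < t → (2:ℝ)⁻¹ ^ t < (2:ℝ)⁻¹ ^ s := by
    intro s t h
    exact pow_lt_pow_right_of_lt_one₀ (by norm_num) (by norm_num) h
  rcases lt_trichotomy k N with hkN | rfl | hkN
  · -- k < N
    set d := γ k with hd
    by_cases hcz : c = z
    · -- β k = z
      by_cases hdz : d = z
      · exact Or.inl (hcz.trans hdz.symm)
      by_cases hre : ∃ j1, k < j1 ∧ j1 ≤ m + 1 ∧ γ j1 = d
      · -- d reappears : contradiction
        exfalso
        obtain ⟨j1, hj1, hj1m, hγj1⟩ := hre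
        have l1 : fb k + fb j1 ≤ Tl γ d k := by
          rw [Tl_succ]
          have : wt γ d k = fb k := by unfold wt; rw [if_pos hd.symm]
          rw [this]
          exact add_le_add le_rfl (le_Tl γ d (by omega) hγj1)
        have l2 : Tl β d k ≤ (2:ℝ)⁻¹ ^ (k+1) := by
          rw [Tl_succ]
          have : wt β d k = 0 := by
            unfold wt; rw [if_neg]; rw [← hc, hcz]; exact fun h => hdz h.symm
          rw [this, zero_add]; exact Tl_le β d (k+1)
        have := HT d hdz
        rw [abs_le] at this
        have h4 : fb (m + 1) ≤ fb j1 := fb_antitone hj1m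
        have h7 : (2:ℝ)⁻¹ ^ (m+3) < (2:ℝ)⁻¹ ^ (m+2) := hstrict (by omega)
        have h5 : fb k = (2:ℝ)⁻¹ ^ (k+1) := rfl
        have h6 : fb (m+1) = (2:ℝ)⁻¹ ^ (m+2) := rfl
        linarith [this.1, this.2]
      · -- d does not reappear up to m+1
        exfalso
        push_neg at hre
        -- β j = d for all j in (k, m+1]
        have Bd : ∀ j, k < j → j ≤ m + 1 → β j = d := by
          intro j hj hjm
          by_contra hne
          have l1 : Tl β d k ≤ (2:ℝ)⁻¹ ^ (k+1) - fb j := by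
            rw [Tl_succ]
            have : wt β d k = 0 := by
              unfold wt; rw [if_neg]; rw [← hc, hcz]; exact fun h => hdz h.symm
            rw [this, zero_add]
            exact Tl_hole β d (by omega) hne
          have l2 : fb k ≤ Tl γ d k := le_Tl γ d le_rfl hd.symm
          have := HT d hdz
          rw [abs_le] at this
          have h4 : fb (m + 1) ≤ fb j := fb_antitone hjm
          have h7 : (2:ℝ)⁻¹ ^ (m+3) < (2:ℝ)⁻¹ ^ (m+2) := hstrict (by omega)
          have h5 : fb k = (2:ℝ)⁻¹ ^ (k+1) := rfl
          have h6 : fb (m+1) = (2:ℝ)⁻¹ ^ (m+2) := rfl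
          linarith [this.1, this.2]
        -- d is not a' nor b'
        have hda : d ≠ a' := fun h => hre N hkN (by omega) (hγN.trans h.symm)
        have hdb : d ≠ b' := fun h => hre (N+1) (by omega) (by omega)
          ((hγt (N+1) (by omega)).trans h.symm)
        -- choose coordinate f
        obtain ⟨f, jf, hfz, hγjf, hjf1, hjf2, hfd⟩ :
            ∃ f jf, f ≠ z ∧ γ jf = f ∧ k < jf ∧ jf ≤ m ∧ f ≠ d := by
          by_cases hbz : b' = z
          · have haz : a' ≠ z := fun h => hab (h.trans hbz.symm)
            exact ⟨a', N, haz, hγN, hkN, by omega, fun h => hda h.symm⟩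
          · exact ⟨b', N+1, hbz, hγt (N+1) (by omega), by omega, by omega,
              fun h => hdb h.symm⟩
        have l1 : fb jf ≤ Tl γ f k := le_Tl γ f (by omega) hγjf
        have l2 : Tl β f k ≤ (2:ℝ)⁻¹ ^ (m+2) := by
          have heq : Tl β f k = Tl β f (m+2) := by
            apply Tl_congr_zero
            · omega
            · intro j hj1 hj2
              rcases Nat.eq_or_lt_of_le hj1 with h | h
              · rw [← h, ← hc, hcz]; exact fun hh => hfz hh.symm
              · rw [Bd j h (by omega)]; exact fun hh => hfd hh.symm
          rw [heq]; exact Tl_le β f (m+2)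
        have := HT f hfz
        rw [abs_le] at this
        have h4 : fb m ≤ fb jf := fb_antitone hjf2
        have h5 : fb m = (2:ℝ)⁻¹ ^ (m+1) := rfl
        have h7 : (2:ℝ)⁻¹ ^ (m+3) < (2:ℝ)⁻¹ ^ (m+2) := hstrict (by omega)
        have h8 : (2:ℝ)⁻¹ ^ (m+2) < (2:ℝ)⁻¹ ^ (m+1) := hstrict (by omega)
        have h9 : (2:ℝ)⁻¹ ^ (m+2) = 2 * (2:ℝ)⁻¹ ^ (m+3) := by ring
        have h10 : (2:ℝ)⁻¹ ^ (m+1) = 2 * (2:ℝ)⁻¹ ^ (m+2) := by ring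
        linarith [this.1, this.2]
    · -- c ≠ z, c ≠ d, k < N : lemA
      exfalso
      have : ∃ j0, k < j0 ∧ j0 ≤ m + 1 ∧ γ j0 ≠ c := by
        by_cases hca : c = a'
        · exact ⟨N + 1, by omega, by omega, by
            rw [hγt (N+1) (by omega), hca]; exact fun h => hab h.symm⟩
        · exact ⟨N, hkN, by omega, by rw [hγN]; exact fun h => hca h.symm⟩
      obtain ⟨j0, hj1, hj2, hj3⟩ := this
      exact lemA γ β m k j0 c hc.symm (fun h => hcd h.symm) hj1 hj2 hj3 (HT c hcz)
  · -- k = k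
    by_cases hcb : c = b'
    · exact Or.inr ⟨rfl, hcb⟩
    by_cases hcz : c = z
    · -- β k = z, c ∉ {a', b'} so a' ≠ z, b' ≠ z
      exfalso
      have haz : a' ≠ z := by
        intro h; apply hcd; rw [hγN, h, hcz]
      have hbz : b' ≠ z := fun h => hcb (hcz.trans h.symm)
      have e1 : Tl β a' k = Tl β a' (k+1) := by
        rw [Tl_succ]
        have : wt β a' k = 0 := by
          unfold wt; rw [if_neg]; rw [← hc, hcz]; exact fun h => haz h.symm
        rw [this, zero_add]
      have e2 : Tl β b' k = Tl β b' (k+1) := by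
        rw [Tl_succ]
        have : wt β b' k = 0 := by
          unfold wt; rw [if_neg]; rw [← hc, hcz]; exact fun h => hbz h.symm
        rw [this, zero_add]
      have l1 : fb k ≤ Tl γ a' k := le_Tl γ a' le_rfl hγN
      have l2 : Tl γ b' k = (2:ℝ)⁻¹ ^ (k+1) := by
        rw [Tl_succ]
        have h0 : wt γ b' k = 0 := by
          unfold wt; rw [if_neg]; rw [hγN]; exact hab
        rw [h0, zero_add]
        exact Tl_full γ b' (k+1) (fun j hj => hγt j (by omega))
      have l3 : Tl β a' (k+1) + Tl β b' (k+1) ≤ (2:ℝ)⁻¹ ^ (k+1) := Tl_pair β hab (k+1)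
      have t1 := HT a' haz
      have t2 := HT b' hbz
      rw [abs_le] at t1 t2
      have h5 : fb k = (2:ℝ)⁻¹ ^ (k+1) := rfl
      have h6 : (2:ℝ)⁻¹ ^ (m+2) < (2:ℝ)⁻¹ ^ (k+1) := hstrict (by omega)
      have h9 : (2:ℝ)⁻¹ ^ (m+2) = 2 * (2:ℝ)⁻¹ ^ (m+3) := by ring
      linarith [t1.1, t1.2, t2.1, t2.2]
    · -- c ≠ z, c ≠ a', c ≠ b' at k = k : lemA with j0 = k+1
      exfalso
      have hj3 : γ (k+1) ≠ c := by
        rw [hγt (k+1) (by omega)]; exact fun h => hcb h.symm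
      exact lemA γ β m k (k+1) c hc.symm (fun h => hcd h.symm) (by omega) (by omega) hj3
        (HT c hcz)
  · -- k > N
    have hγk : γ k = b' := hγt k hkN
    by_cases hcz : c = z
    · exfalso
      have hbz : b' ≠ z := by
        intro h; apply hcd; rw [hγk, h, hcz]
      have l1 : Tl γ b' k = (2:ℝ)⁻¹ ^ k := Tl_full γ b' k (fun j hj => hγt j (by omega))
      have l2 : Tl β b' k ≤ (2:ℝ)⁻¹ ^ (k+1) := by
        rw [Tl_succ]
        have : wt β b' k = 0 := by
          unfold wt; rw [if_neg]; rw [← hc, hcz]; exact fun h => hbz h.symm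
        rw [this, zero_add]; exact Tl_le β b' (k+1)
      have := HT b' hbz
      rw [abs_le] at this
      have h6 : (2:ℝ)⁻¹ ^ (m+3) < (2:ℝ)⁻¹ ^ (k+1) := hstrict (by omega)
      have h10 : (2:ℝ)⁻¹ ^ k = 2 * (2:ℝ)⁻¹ ^ (k+1) := by ring
      linarith [this.1, this.2]
    · exfalso
      have hcb : γ (k+1) ≠ c := by
        rw [hγt (k+1) (by omega)]
        intro h; apply hcd; rw [hγk, h]
      exact lemA γ β m k (k+1) c hc.symm (fun h => hcd h.symm) (by omega) (by omega) hcb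
        (HT c hcz)

lemma Pv_swap {A : Type*} (α : ℕ → A) (N : ℕ) (a b : A) (hab : a ≠ b)
    (hαN : α N = a) (htail : ∀ k, N < k → α k = b) (c : A) :
    Pv (fun j => if j < N then α j else if j = N then b else a) c = Pv α c := by
  set α' : ℕ → A := fun j => if j < N then α j else if j = N then b else a with hα'
  rw [Pv_split α' c N, Pv_split α c N]
  have hlow : ∑ j ∈ Finset.range N, wt α' c j = ∑ j ∈ Finset.range N, wt α c j := by
    apply Finset.sum_congr rfl
    intro j hj
    unfold wt
    rw [hα']
    simp only [if_pos (Finset.mem_range.1 hj)]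
  rw [hlow]
  congr 1
  have hα'N : α' N = b := by rw [hα']; simp
  have hα't : ∀ j, N < j → α' j = a := by
    intro j hj; rw [hα']; simp only [if_neg (by omega : ¬ j < N), if_neg (by omega : ¬ j = N)]
  have expand : ∀ (γ : ℕ → A), Tl γ c N = wt γ c N + Tl γ c (N+1) := fun γ => Tl_succ γ c N
  rw [expand α', expand α]
  by_cases hca : c = a
  · subst hca
    have w1 : wt α' c N = 0 := by unfold wt; rw [if_neg]; rw [hα'N]; exact hab.symm
    have w2 : wt α c N = fb N := by unfold wt; rw [if_pos hαN]
    have t1 : Tl α' c (N+1) = (2:ℝ)⁻¹ ^ (N+1) := Tl_full α' c (N+1) fun j hj => hα't j (by omega)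
    have t2 : Tl α c (N+1) = 0 := by
      apply Tl_zero
      intro j hj h
      rw [htail j (by omega)] at h
      first | exact hab h | exact hab h.symm | exact hca h | exact hca h.symm | exact hcb h | exact hcb h.symm
    rw [w1, w2, t1, t2]
    have : fb N = (2:ℝ)⁻¹ ^ (N+1) := rfl
    rw [this]; ring
  by_cases hcb : c = b
  · subst hcb
    have w1 : wt α' c N = fb N := by unfold wt; rw [if_pos hα'N]
    have w2 : wt α c N = 0 := by unfold wt; rw [if_neg]; rw [hαN]; exact hab
    have t1 : Tl α' c (N+1) = 0 := by
      apply Tl_zero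
      intro j hj h
      rw [hα't j (by omega)] at h
      first | exact hab h | exact hab h.symm | exact hca h | exact hca h.symm | exact hcb h | exact hcb h.symm
    have t2 : Tl α c (N+1) = (2:ℝ)⁻¹ ^ (N+1) := Tl_full α c (N+1) fun j hj => htail j (by omega)
    rw [w1, w2, t1, t2]
    have : fb N = (2:ℝ)⁻¹ ^ (N+1) := rfl
    rw [this]; ring
  · have w1 : wt α' c N = 0 := by unfold wt; rw [if_neg]; rw [hα'N]; exact fun h => hcb h.symm
    have w2 : wt α c N = 0 := by unfold wt; rw [if_neg]; rw [hαN]; exact fun h => hca h.symm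
    have t1 : Tl α' c (N+1) = 0 := by
      apply Tl_zero
      intro j hj h
      rw [hα't j (by omega)] at h
      first | exact hab h | exact hab h.symm | exact hca h | exact hca h.symm | exact hcb h | exact hcb h.symm
    have t2 : Tl α c (N+1) = 0 := by
      apply Tl_zero
      intro j hj h
      rw [htail j (by omega)] at h
      first | exact hab h | exact hab h.symm | exact hca h | exact hca h.symm | exact hcb h | exact hcb h.symm
    rw [w1, w2, t1, t2]


lemma pFun_eq_Pv {A : Type*} (z : A) (γ : ℕ → A) (c : A) (hc : c ≠ z) :
    pFun z γ ⟨c, hc⟩ = Pv γ c := by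
  unfold pFun Pv
  rw [tsum_subtype {k : ℕ | γ k = c} (fun k => (2 : ℝ)⁻¹ ^ (k + 1))]
  apply tsum_congr
  intro j
  rw [Set.indicator_apply]
  unfold wt fb
  simp only [Set.mem_setOf_eq]

lemma pp_apply {A : Type*} (z : A) (γ : ℕ → A) (P : ℝ≥0∞) [Fact (1 ≤ P)]
    (c : {b : A // b ≠ z}) : (pp z γ P : ∀ _ : {b : A // b ≠ z}, ℝ) c = pFun z γ c := rfl

end AuxTails

/-- Proposition 3.4. Suppose `α N = a`, `α k = b` for all `k > N`,
with `N ≥ 1` and `a ≠ b`. If `‖p_p(αⁿ) - p_p(α)‖ → 0` in `l^p(A)`, then for every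
`m > N + 1` there is `L` such that for every `l ≥ L` either `αˡ` agrees with `α` before `N`,
`αˡ N = a` and `αˡ k = b` for `N < k ≤ m`, or `αˡ` agrees with `α` before `N`, `αˡ N = b`
and `αˡ k = a` for `N < k ≤ m`. -/
theorem eventual_shape_of_norm_conv {A : Type*} [Infinite A] (z : A) (P : ℝ≥0∞)
    [Fact (1 ≤ P)] (hP : P ≠ ∞) (α : ℕ → A) (αs : ℕ → ℕ → A)
    (N : ℕ) (hN : 1 ≤ N) (a b : A) (hab : a ≠ b)
    (hαN : α N = a) (htail : ∀ k : ℕ, N < k → α k = b)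
    (hlim : Tendsto (fun n : ℕ => ‖pp z (αs n) P - pp z α P‖) atTop (𝓝 0)) :
    ∀ m : ℕ, N + 1 < m → ∃ L : ℕ, ∀ l ≥ L,
      ((∀ k < N, αs l k = α k) ∧ αs l N = a ∧ (∀ k : ℕ, N < k → k ≤ m → αs l k = b)) ∨
      ((∀ k < N, αs l k = α k) ∧ αs l N = b ∧ (∀ k : ℕ, N < k → k ≤ m → αs l k = a)) := by
  intro m hm
  have hP0 : P ≠ 0 := by
    have h1 : (1 : ℝ≥0∞) ≤ P := Fact.out
    intro h; rw [h] at h1; simp at h1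
  set ε := (2:ℝ)⁻¹ ^ (m+3) with hε_def
  have hε : 0 < ε := by positivity
  have hev : ∀ᶠ n in atTop, ‖pp z (αs n) P - pp z α P‖ < ε := hlim.eventually_lt_const hε
  obtain ⟨L, hL⟩ := eventually_atTop.1 hev
  refine ⟨L, fun l hl => ?_⟩
  have hnorm := hL l hl
  have Hc : ∀ c : A, c ≠ z → |Pv (αs l) c - Pv α c| ≤ ε := by
    intro c hc
    have h1 : ‖(pp z (αs l) P - pp z α P) ⟨c, hc⟩‖ ≤ ‖pp z (αs l) P - pp z α P‖ :=
      lp.norm_apply_le_norm hP0 _ _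
    have h2 : (pp z (αs l) P - pp z α P) ⟨c, hc⟩ = Pv (αs l) c - Pv α c := by
      have h3 : (pp z (αs l) P - pp z α P) ⟨c, hc⟩ = pp z (αs l) P ⟨c, hc⟩ - pp z α P ⟨c, hc⟩ := by
        rw [lp.coeFn_sub]; rfl
      rw [h3, pp_apply, pp_apply, pFun_eq_Pv, pFun_eq_Pv]
    rw [h2, Real.norm_eq_abs] at h1
    linarith
  set α' : ℕ → A := fun j => if j < N then α j else if j = N then b else a with hα'
  have Hc' : ∀ c : A, c ≠ z → |Pv (αs l) c - Pv α' c| ≤ ε := by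
    intro c hc
    rw [hα', Pv_swap α N a b hab hαN htail c]
    exact Hc c hc
  have hα'N : α' N = b := by rw [hα']; simp
  have hα't : ∀ j, N < j → α' j = a := by
    intro j hj; rw [hα']
    simp only [if_neg (by omega : ¬ j < N), if_neg (by omega : ¬ j = N)]
  have hα'low : ∀ j, j < N → α' j = α j := by
    intro j hj; rw [hα']; simp [hj]
  have key : ∀ k, k ≤ m + 1 → (∀ j < k, αs l j = α j) ∨ (∀ j < k, αs l j = α' j) := by
    intro k hk1
    induction k with
    | zero => left; omega
    | succ k ih =>
      have hk : k ≤ m := by omega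
      rcases ih (by omega) with h | h
      · rcases step z α (αs l) N m a b hm hab hαN htail Hc k hk h with h2 | ⟨rfl, h2⟩
        · left; intro j hj
          rcases Nat.lt_succ_iff_lt_or_eq.1 hj with hj | rfl
          · exact h j hj
          · exact h2
        · right; intro j hj
          rcases Nat.lt_succ_iff_lt_or_eq.1 hj with hj | rfl
          · rw [h j hj, hα'low j hj]
          · rw [h2, hα'N]
      · rcases step z α' (αs l) N m b a hm hab.symm hα'N hα't Hc' k hk h with h2 | ⟨rfl, h2⟩
        · right; intro j hj
          rcases Nat.lt_succ_iff_lt_or_eq.1 hj with hj | rfl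
          · exact h j hj
          · exact h2
        · left; intro j hj
          rcases Nat.lt_succ_iff_lt_or_eq.1 hj with hj | rfl
          · rw [h j hj, hα'low j hj]
          · rw [h2, hαN]
  rcases key (m+1) le_rfl with h | h
  · left
    exact ⟨fun k hk => by rw [h k (by omega)],
      by rw [h N (by omega), hαN],
      fun k h1 h2 => by rw [h k (by omega), htail k h1]⟩
  · right
    refine ⟨fun k hk => by rw [h k (by omega), hα'low k hk],
      by rw [h N (by omega), hα'N],
      fun k h1 h2 => by rw [h k (by omega), hα't k h1]⟩
end
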